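/- arXiv:1201.0416 — 6 statements merged into one kernel-verified Lean document; each statement's English description precedes it below -/
import Mathlib

section
/- Let S be a set and R ⊆ S × D(S) a relation from states to finitely supported probability distributions over S. Define the lifted relation R̄ ⊆ D(S) × D(S) as the smallest relation such that (i) if s R Θ then δ_s R̄ Θ (where δ_s is the point distribution at s), and (ii) if Δ_i R̄ Θ_i for i in a finite index set I and p_i ∈ [0,1] with Σ p_i = 1, then (Σ p_i·Δ_i) R̄ (Σ p_i·Θ_i). Then Δ R̄ Θ holds if and only if there exists a finite index set I, probabilities p_i summing to 1, states s_i, and distributions Θ_i such that Δ = Σ_{i∈I} p_i·δ_{s_i}, Θ = Σ_{i∈I} p_i·Θ_i, and s_i R Θ_i for each i ∈ I. -/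
open BigOperators

/-- Finitely supported real-valued functions; distributions live inside these. -/
abbrev PDist (S : Type) := S →₀ ℝ

/-- The point distribution assigning probability 1 to `s`. -/
noncomputable def point {S : Type} (s : S) : PDist S := Finsupp.single s 1

/-- `Δ` is a (finitely supported) probability distribution. -/
def IsDist {S : Type} (Δ : PDist S) : Prop :=
  (∀ s, 0 ≤ Δ s) ∧ (Δ.sum fun _ x => x) = 1

/-- The lifting of a relation from states to distributions, defined as the smallest
relation containing the point rule and closed under finite convex combinations. -/
inductive Lift {S : Type} (R : S → PDist S → Prop) : PDist S → PDist S → Prop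
  | pt {s : S} {Θ : PDist S} : R s Θ → Lift R (point s) Θ
  | lin (I : Finset ℕ) (p : ℕ → ℝ) (Δ Θ : ℕ → PDist S) :
      (∀ i ∈ I, 0 ≤ p i) → (∑ i ∈ I, p i) = 1 →
      (∀ i ∈ I, Lift R (Δ i) (Θ i)) →
      Lift R (∑ i ∈ I, p i • Δ i) (∑ i ∈ I, p i • Θ i)

/-- The lifting of a relation on states to a relation on distributions. -/
def liftRel {S : Type} (R : S → S → Prop) : PDist S → PDist S → Prop :=
  Lift (fun s Θ => ∃ t, R s t ∧ Θ = point t)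

/-- Characterisation of the lifting: `Δ (Lift R) Θ` iff `Δ` decomposes as a finite convex
combination of point distributions `δ_{s_i}` with matching `Θ_i` such that `s_i R Θ_i`. -/
theorem lift_characterisation {S : Type} (R : S → PDist S → Prop)
    (hR : ∀ s Θ, R s Θ → IsDist Θ) (Δ Θ : PDist S) (hΔ : IsDist Δ) (hΘ : IsDist Θ) :
    Lift R Δ Θ ↔
      ∃ (I : Finset ℕ) (p : ℕ → ℝ) (s : ℕ → S) (Θi : ℕ → PDist S),
        (∀ i ∈ I, 0 ≤ p i) ∧ (∑ i ∈ I, p i) = 1 ∧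
        Δ = (∑ i ∈ I, p i • point (s i)) ∧
        Θ = (∑ i ∈ I, p i • Θi i) ∧
        (∀ i ∈ I, R (s i) (Θi i)) := by
  constructor
  · intro h
    clear hΔ hΘ
    induction h with
    | @pt s Θ hs =>
        refine ⟨{0}, fun _ => 1, fun _ => s, fun _ => Θ, ?_, ?_, ?_, ?_, ?_⟩ <;> simp [hs]
    | lin I p Δf Θf hp hsum hlift ih =>
        -- S is nonempty since I is nonempty
        have hInon : I.Nonempty := by
          by_contra hI
          rw [Finset.not_nonempty_iff_eq_empty] at hI
          simp [hI] at hsum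
        obtain ⟨i0, hi0⟩ := hInon
        obtain ⟨_, _, s0, _, _⟩ := ih i0 hi0
        have : Nonempty S := ⟨s0 0⟩
        have ih' : ∀ i, ∃ (J : Finset ℕ) (q : ℕ → ℝ) (s : ℕ → S) (Θi : ℕ → PDist S),
            i ∈ I → ((∀ j ∈ J, 0 ≤ q j) ∧ (∑ j ∈ J, q j) = 1 ∧
              Δf i = (∑ j ∈ J, q j • point (s j)) ∧
              Θf i = (∑ j ∈ J, q j • Θi j) ∧ (∀ j ∈ J, R (s j) (Θi j))) := by
          intro i
          by_cases h : i ∈ I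
          · obtain ⟨J, q, s, Θi, h1, h2, h3, h4, h5⟩ := ih i h
            exact ⟨J, q, s, Θi, fun _ => ⟨h1, h2, h3, h4, h5⟩⟩
          · exact ⟨∅, 0, fun _ => Classical.arbitrary S, 0, fun h' => absurd h' h⟩
        choose J q s Θi hh using ih'
        set K : Finset ℕ := I.biUnion (fun i => (J i).image (fun j => Nat.pair i j)) with hK
        have key : ∀ {M : Type} [AddCommMonoid M] (f : ℕ → M),
            (∑ n ∈ K, f n) = ∑ i ∈ I, ∑ j ∈ J i, f (Nat.pair i j) := by
          intro M _ f
          rw [hK, Finset.sum_biUnion]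
          · refine Finset.sum_congr rfl fun i _ => ?_
            rw [Finset.sum_image]
            intro a _ b _ hab
            exact (Nat.pair_eq_pair.mp hab).2
          · intro i hi i' hi' hne
            simp only [Finset.disjoint_left, Finset.mem_image]
            rintro a ⟨j, hj, rfl⟩ ⟨j', hj', hpair⟩
            exact hne (Nat.pair_eq_pair.mp hpair).1.symm
        have memK : ∀ n ∈ K, ∃ i ∈ I, ∃ j ∈ J i, n = Nat.pair i j := by
          intro n hn
          rw [hK] at hn
          simp only [Finset.mem_biUnion, Finset.mem_image] at hn
          obtain ⟨i, hi, j, hj, rfl⟩ := hn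
          exact ⟨i, hi, j, hj, rfl⟩
        refine ⟨K, fun n => p n.unpair.1 * q n.unpair.1 n.unpair.2,
          fun n => s n.unpair.1 n.unpair.2, fun n => Θi n.unpair.1 n.unpair.2,
          ?_, ?_, ?_, ?_, ?_⟩
        · intro n hn
          obtain ⟨i, hi, j, hj, rfl⟩ := memK n hn
          simp only [Nat.unpair_pair]
          exact mul_nonneg (hp i hi) ((hh i hi).1 j hj)
        · rw [key]
          rw [← hsum]
          refine Finset.sum_congr rfl fun i hi => ?_
          simp only [Nat.unpair_pair]
          rw [← Finset.mul_sum, (hh i hi).2.1, mul_one]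
        · rw [key]
          refine Finset.sum_congr rfl fun i hi => ?_
          simp only [Nat.unpair_pair]
          rw [(hh i hi).2.2.1, Finset.smul_sum]
          refine Finset.sum_congr rfl fun j hj => ?_
          rw [smul_smul]
        · rw [key]
          refine Finset.sum_congr rfl fun i hi => ?_
          simp only [Nat.unpair_pair]
          rw [(hh i hi).2.2.2.1, Finset.smul_sum]
          refine Finset.sum_congr rfl fun j hj => ?_
          rw [smul_smul]
        · intro n hn
          obtain ⟨i, hi, j, hj, rfl⟩ := memK n hn
          simp only [Nat.unpair_pair]
          exact (hh i hi).2.2.2.2 j hj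
  · rintro ⟨I, p, s, Θi, h1, h2, rfl, rfl, h5⟩
    exact Lift.lin I p (fun i => point (s i)) Θi h1 h2 (fun i hi => Lift.pt (h5 i hi))
end

section
/- Let R₁, R₂ ⊆ S × S be binary relations on states. Then the lifting of the composition equals the composition of the liftings: lift(R₁ ∘ R₂) = lift(R₁) ∘ lift(R₂) as relations on distributions over S. -/
open BigOperators
open scoped Classical

lemma lift_lin_gen {S ι : Type} {R : S → PDist S → Prop} (I : Finset ι) (p : ι → ℝ)
    (Δ Θ : ι → PDist S)
    (h0 : ∀ i ∈ I, 0 ≤ p i) (h1 : ∑ i ∈ I, p i = 1)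
    (h2 : ∀ i ∈ I, Lift R (Δ i) (Θ i)) :
    Lift R (∑ i ∈ I, p i • Δ i) (∑ i ∈ I, p i • Θ i) := by
  classical
  have hn : 0 < I.card := by
    rcases Finset.eq_empty_or_nonempty I with h | h
    · subst h; simp at h1
    · exact Finset.card_pos.2 h
  set n := I.card with hndef
  set e := I.equivFin with hedef
  set f : ℕ → ι := fun m => (e.symm ⟨m % n, Nat.mod_lt _ hn⟩ : ι) with hfdef
  have hf : ∀ m, f m ∈ I := fun m => (e.symm ⟨m % n, Nat.mod_lt _ hn⟩).2
  have key : ∀ {M : Type} [AddCommMonoid M] (g : ι → M),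
      ∑ m ∈ Finset.range n, g (f m) = ∑ i ∈ I, g i := by
    intro M _ g
    rw [← Fin.sum_univ_eq_sum_range (fun m => g (f m)) n]
    rw [← Finset.sum_coe_sort I g]
    rw [← e.symm.sum_comp (fun x => g x)]
    apply Finset.sum_congr rfl
    intro m _
    have hm : (⟨↑m % n, Nat.mod_lt _ hn⟩ : Fin n) = m := Fin.ext (Nat.mod_eq_of_lt m.isLt)
    have : f ↑m = ↑(e.symm m) := congrArg (fun x => (e.symm x : ι)) hm
    rw [this]
  have := Lift.lin (R := R) (Finset.range n) (fun m => p (f m)) (fun m => Δ (f m))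
    (fun m => Θ (f m)) (fun m _ => h0 (f m) (hf m)) (by rw [key p]; exact h1)
    (fun m _ => h2 (f m) (hf m))
  rwa [key (fun i => p i • Δ i), key (fun i => p i • Θ i)] at this

lemma lift_of_coupling {S ι : Type} {R : S → S → Prop} (J : Finset ι)
    (q : ι → ℝ) (a b : ι → S) (h0 : ∀ i ∈ J, 0 ≤ q i) (h1 : ∑ i ∈ J, q i = 1)
    (hR : ∀ i ∈ J, R (a i) (b i)) :
    liftRel R (∑ i ∈ J, q i • point (a i)) (∑ i ∈ J, q i • point (b i)) :=
  lift_lin_gen J q _ _ h0 h1 (fun i hi => Lift.pt ⟨b i, hR i hi, rfl⟩)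

lemma coupling_of_lift {S : Type} {R : S → S → Prop} {Δ Θ : PDist S}
    (h : liftRel R Δ Θ) :
    ∃ (J : Finset (S × S)) (q : S × S → ℝ),
      (∀ x ∈ J, 0 ≤ q x) ∧ (∑ x ∈ J, q x) = 1 ∧ (∀ x ∈ J, R x.1 x.2) ∧
      Δ = ∑ x ∈ J, q x • point x.1 ∧ Θ = ∑ x ∈ J, q x • point x.2 := by
  classical
  induction h with
  | @pt s Θ h =>
    obtain ⟨t, hR, rfl⟩ := h
    refine ⟨{(s, t)}, fun _ => 1, by simp, by simp, by simp [hR], by simp, by simp⟩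
  | lin I p Δs Θs h0 h1 h2 ih =>
    choose Jd qd hq0 hq1 hqR hqΔ hqΘ using ih
    set J : ℕ → Finset (S × S) := fun i => if h : i ∈ I then Jd i h else ∅ with hJ
    set q : ℕ → S × S → ℝ := fun i => if h : i ∈ I then qd i h else 0 with hq
    have hJi : ∀ i (hi : i ∈ I), J i = Jd i hi := fun i hi => dif_pos hi
    have hqi : ∀ i (hi : i ∈ I), q i = qd i hi := fun i hi => dif_pos hi
    set JJ : Finset (S × S) := I.biUnion J with hJJ
    set qq : S × S → ℝ := fun x => ∑ i ∈ I, p i * (if x ∈ J i then q i x else 0) with hqq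
    have hsub : ∀ i ∈ I, J i ⊆ JJ := fun i hi => Finset.subset_biUnion_of_mem J hi
    have key : ∀ {M : Type} [AddCommMonoid M] [Module ℝ M] (F : S × S → M),
        ∑ x ∈ JJ, qq x • F x = ∑ i ∈ I, p i • ∑ x ∈ J i, q i x • F x := by
      intro M _ _ F
      have : ∀ x ∈ JJ, qq x • F x
          = ∑ i ∈ I, (p i * (if x ∈ J i then q i x else 0)) • F x := by
        intro x _
        rw [hqq]
        rw [Finset.sum_smul]
      rw [Finset.sum_congr rfl this, Finset.sum_comm]
      apply Finset.sum_congr rfl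
      intro i hi
      have : ∀ x ∈ JJ, (p i * (if x ∈ J i then q i x else 0)) • F x
          = if x ∈ J i then (p i * q i x) • F x else 0 := by
        intro x _
        split <;> simp
      rw [Finset.sum_congr rfl this, Finset.sum_ite_mem,
        Finset.inter_eq_right.2 (hsub i hi), Finset.smul_sum]
      apply Finset.sum_congr rfl
      intro x _
      rw [mul_smul]
    refine ⟨JJ, qq, ?_, ?_, ?_, ?_, ?_⟩
    · intro x _
      apply Finset.sum_nonneg
      intro i hi
      apply mul_nonneg (h0 i hi)
      split
      · rename_i hx
        rw [hqi i hi]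
        exact hq0 i hi x (by rwa [hJi i hi] at hx)
      · exact le_rfl
    · have := key (M := ℝ) (fun _ => (1:ℝ))
      simp only [smul_eq_mul, mul_one] at this
      rw [this, ← h1]
      apply Finset.sum_congr rfl
      intro i hi
      rw [hqi i hi, hJi i hi, hq1 i hi, mul_one]
    · intro x hx
      obtain ⟨i, hi, hxi⟩ := Finset.mem_biUnion.1 hx
      exact hqR i hi x (by rwa [hJi i hi] at hxi)
    · rw [key]
      apply Finset.sum_congr rfl
      intro i hi
      rw [hqi i hi, hJi i hi, ← hqΔ i hi]
    · rw [key]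
      apply Finset.sum_congr rfl
      intro i hi
      rw [hqi i hi, hJi i hi, ← hqΘ i hi]

lemma pd_rep_apply {S ι : Type} (J : Finset ι) (q : ι → ℝ) (c : ι → S) (s : S) :
    (∑ i ∈ J, q i • point (c i)) s = ∑ i ∈ J, q i * (if c i = s then 1 else 0) := by
  classical
  rw [Finsupp.finset_sum_apply]
  apply Finset.sum_congr rfl
  intro i _
  rw [Finsupp.smul_apply, smul_eq_mul, point, Finsupp.single_apply]

lemma pd_rep_nonneg {S ι : Type} (J : Finset ι) (q : ι → ℝ) (c : ι → S)
    (h0 : ∀ i ∈ J, 0 ≤ q i) (s : S) :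
    0 ≤ (∑ i ∈ J, q i • point (c i)) s := by
  rw [pd_rep_apply]
  apply Finset.sum_nonneg
  intro i hi
  apply mul_nonneg (h0 i hi)
  split <;> norm_num

lemma pd_rep_filter {S ι : Type} (J : Finset ι) (q : ι → ℝ) (c : ι → S) (s : S) :
    ∑ i ∈ J.filter (fun i => c i = s), q i = (∑ i ∈ J, q i • point (c i)) s := by
  classical
  rw [pd_rep_apply, Finset.sum_filter]
  apply Finset.sum_congr rfl
  intro i _
  split <;> simp

lemma pd_rep_le {S ι : Type} (J : Finset ι) (q : ι → ℝ) (c : ι → S)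
    (h0 : ∀ i ∈ J, 0 ≤ q i) (i : ι) (hi : i ∈ J) :
    q i ≤ (∑ j ∈ J, q j • point (c j)) (c i) := by
  classical
  rw [pd_rep_apply]
  have := Finset.single_le_sum (f := fun j => q j * (if c j = c i then 1 else 0))
    (fun j hj => mul_nonneg (h0 j hj) (by split <;> norm_num)) hi
  simpa using this

lemma pd_inner_sum {S α β : Type} (A : Finset α) (B : Finset β) (u : α → ℝ) (v : β → ℝ)
    (f : α → S) (g : β → S) (Γf : S → ℝ)
    (hu : ∀ a ∈ A, 0 ≤ u a) (huΓ : ∀ a ∈ A, u a ≤ Γf (f a))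
    (hv : ∀ s, ∑ b ∈ B.filter (fun b => g b = s), v b = Γf s)
    {M : Type} [AddCommMonoid M] [Module ℝ M] (F : α → M) :
    ∑ a ∈ A, ∑ b ∈ B, (if f a = g b then u a * v b / Γf (f a) else 0) • F a
      = ∑ a ∈ A, u a • F a := by
  classical
  apply Finset.sum_congr rfl
  intro a ha
  rw [← Finset.sum_smul]
  congr 1
  by_cases hΓ : Γf (f a) = 0
  · have hu0 : u a = 0 := le_antisymm (hΓ ▸ huΓ a ha) (hu a ha)
    rw [hu0]
    apply Finset.sum_eq_zero
    intro b _
    split <;> simp [hu0]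
  · have hcong : ∀ b ∈ B, (if f a = g b then u a * v b / Γf (f a) else 0)
        = (u a / Γf (f a)) * (if g b = f a then v b else 0) := by
      intro b _
      by_cases h : f a = g b
      · rw [if_pos h, if_pos h.symm]; ring
      · rw [if_neg h, if_neg (fun hh => h hh.symm), mul_zero]
    rw [Finset.sum_congr rfl hcong, ← Finset.mul_sum, ← Finset.sum_filter, hv (f a),
      div_mul_cancel₀ _ hΓ]

/-- The lifting of the composition of two state relations coincides with the composition
of their liftings. -/
theorem lift_comp {S : Type} (R₁ R₂ : S → S → Prop) (Δ Θ : PDist S) :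
    liftRel (Relation.Comp R₁ R₂) Δ Θ ↔ Relation.Comp (liftRel R₁) (liftRel R₂) Δ Θ := by
  classical
  constructor
  · intro h
    induction h with
    | @pt s Θ h =>
      obtain ⟨t, ⟨u, hu1, hu2⟩, rfl⟩ := h
      exact ⟨point u, Lift.pt ⟨u, hu1, rfl⟩, Lift.pt ⟨t, hu2, rfl⟩⟩
    | lin I p Δs Θs h0 h1 h2 ih =>
      choose Γd hΓ1 hΓ2 using ih
      set Γ : ℕ → PDist S := fun i => if h : i ∈ I then Γd i h else 0 with hΓ
      refine ⟨∑ i ∈ I, p i • Γ i, Lift.lin I p Δs Γ h0 h1 ?_, Lift.lin I p Γ Θs h0 h1 ?_⟩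
      · intro i hi
        have : Γ i = Γd i hi := dif_pos hi
        rw [this]
        exact hΓ1 i hi
      · intro i hi
        have : Γ i = Γd i hi := dif_pos hi
        rw [this]
        exact hΓ2 i hi
  · rintro ⟨Γ, hΔΓ, hΓΘ⟩
    obtain ⟨J, q, hq0, hq1, hqR, hΔ, hG1⟩ := coupling_of_lift hΔΓ
    obtain ⟨K, r, hr0, hr1, hrR, hG2, hΘ⟩ := coupling_of_lift hΓΘ
    -- hG1 : Γ = ∑ x ∈ J, q x • point x.2 ; hG2 : Γ = ∑ y ∈ K, r y • point y.1
    set L : Finset ((S × S) × (S × S)) := (J ×ˢ K).filter (fun z => z.1.2 = z.2.1) with hL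
    set w : (S × S) × (S × S) → ℝ := fun z => q z.1 * r z.2 / Γ z.1.2 with hw
    have hΓnn : ∀ s, 0 ≤ Γ s := by
      intro s
      rw [hG1]
      exact pd_rep_nonneg J q (fun x => x.2) hq0 s
    have hmemL : ∀ z ∈ L, z.1 ∈ J ∧ z.2 ∈ K ∧ z.1.2 = z.2.1 := by
      intro z hz
      rw [hL, Finset.mem_filter, Finset.mem_product] at hz
      exact ⟨hz.1.1, hz.1.2, hz.2⟩
    -- marginal computations
    have unfold1 : ∀ {M : Type} [AddCommMonoid M] [Module ℝ M]
        (F : (S × S) × (S × S) → M),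
        ∑ z ∈ L, w z • F z
          = ∑ x ∈ J, ∑ y ∈ K, (if x.2 = y.1 then w (x, y) • F (x, y) else 0) := by
      intro M _ _ F
      rw [hL, Finset.sum_filter, Finset.sum_product]
    have hqle : ∀ x ∈ J, q x ≤ Γ x.2 := by
      intro x hx
      rw [hG1]
      exact pd_rep_le J q (fun x => x.2) hq0 x hx
    have hrle : ∀ y ∈ K, r y ≤ Γ y.1 := by
      intro y hy
      rw [hG2]
      exact pd_rep_le K r (fun y => y.1) hr0 y hy
    have hvK : ∀ s, ∑ y ∈ K.filter (fun y => y.1 = s), r y = Γ s := by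
      intro s
      rw [hG2]
      exact pd_rep_filter K r (fun y => y.1) s
    have hvJ : ∀ s, ∑ x ∈ J.filter (fun x => x.2 = s), q x = Γ s := by
      intro s
      rw [hG1]
      exact pd_rep_filter J q (fun x => x.2) s
    have marg1 : ∀ {M : Type} [AddCommMonoid M] [Module ℝ M] (F : S × S → M),
        ∑ z ∈ L, w z • F z.1 = ∑ x ∈ J, q x • F x := by
      intro M _ _ F
      rw [unfold1 (fun z => F z.1)]
      have := pd_inner_sum J K q r (fun x => x.2) (fun y => y.1) (fun s => Γ s)
        hq0 hqle hvK F
      rw [← this]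
      apply Finset.sum_congr rfl
      intro x _
      apply Finset.sum_congr rfl
      intro y _
      split <;> simp [hw]
    have marg2 : ∀ {M : Type} [AddCommMonoid M] [Module ℝ M] (F : S × S → M),
        ∑ z ∈ L, w z • F z.2 = ∑ y ∈ K, r y • F y := by
      intro M _ _ F
      rw [unfold1 (fun z => F z.2), Finset.sum_comm]
      have := pd_inner_sum K J r q (fun y => y.1) (fun x => x.2) (fun s => Γ s)
        hr0 hrle hvJ F
      rw [← this]
      apply Finset.sum_congr rfl
      intro y _
      apply Finset.sum_congr rfl
      intro x _
      by_cases h : x.2 = y.1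
      · rw [if_pos h, if_pos h.symm]
        show w (x, y) • F y = (r y * q x / Γ y.1) • F y
        congr 1
        show q x * r y / Γ x.2 = r y * q x / Γ y.1
        rw [h, mul_comm]
      · rw [if_neg h, if_neg (fun hh => h hh.symm), zero_smul]
    have hw0 : ∀ z ∈ L, 0 ≤ w z := by
      intro z hz
      obtain ⟨hz1, hz2, _⟩ := hmemL z hz
      exact div_nonneg (mul_nonneg (hq0 _ hz1) (hr0 _ hz2)) (hΓnn _)
    have hwsum : ∑ z ∈ L, w z = 1 := by
      have := marg1 (M := ℝ) (fun _ => (1:ℝ))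
      simpa [hq1] using this
    have hrel : ∀ z ∈ L, Relation.Comp R₁ R₂ z.1.1 z.2.2 := by
      intro z hz
      obtain ⟨hz1, hz2, hz3⟩ := hmemL z hz
      exact ⟨z.1.2, hqR _ hz1, hz3 ▸ hrR _ hz2⟩
    have key := lift_of_coupling L w (fun z => z.1.1) (fun z => z.2.2) hw0 hwsum hrel
    rwa [marg1 (fun x => point x.1), marg2 (fun y => point y.2), ← hΔ, ← hΘ] at key
end

section
/- Let R ⊆ S × S be a relation on states. Then Δ lift(R) Θ if and only if there exists a finite index set I, probabilities p_i summing to 1, and states s_i, t_i such that Δ = Σ_{i∈I} p_i·δ_{s_i}, Θ = Σ_{i∈I} p_i·δ_{t_i}, and s_i R t_i for each i ∈ I. -/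
open BigOperators

private lemma pair_disjoint (I : Finset ℕ) (J : ℕ → Finset ℕ) :
    Set.PairwiseDisjoint ↑I fun i => (J i).image (Nat.pair i) := by
  intro a _ b _ hab
  simp only [Finset.disjoint_left, Finset.mem_image]
  rintro x ⟨j, _, rfl⟩ ⟨j', _, h⟩
  exact hab (by simpa using congrArg (fun n => n.unpair.1) h.symm)

/-- Characterisation of the lifting of a state relation: `Δ lift(R) Θ` iff both sides
decompose as matching convex combinations of point distributions with `s_i R t_i`. -/
theorem liftRel_characterisation {S : Type} (R : S → S → Prop) (Δ Θ : PDist S) :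
    liftRel R Δ Θ ↔
      ∃ (I : Finset ℕ) (p : ℕ → ℝ) (s t : ℕ → S),
        (∀ i ∈ I, 0 ≤ p i) ∧ (∑ i ∈ I, p i) = 1 ∧
        Δ = (∑ i ∈ I, p i • point (s i)) ∧
        Θ = (∑ i ∈ I, p i • point (t i)) ∧
        (∀ i ∈ I, R (s i) (t i)) := by
  constructor
  · intro h
    induction h with
    | @pt s Θ hR =>
      obtain ⟨t, hRt, rfl⟩ := hR
      refine ⟨{0}, fun _ => 1, fun _ => s, fun _ => t, by simp, by simp, by simp, by simp,
        fun _ _ => hRt⟩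
    | lin I p Δ' Θ' hp hp1 _ ih =>
      have hIne : I.Nonempty := by
        rcases I.eq_empty_or_nonempty with h | h
        · simp [h] at hp1
        · exact h
      obtain ⟨i0, hi0⟩ := hIne
      obtain ⟨_, _, s0, _, _⟩ := ih i0 hi0
      haveI : Nonempty S := ⟨s0 0⟩
      have ih' : ∀ i, ∃ (J : Finset ℕ) (q : ℕ → ℝ) (s t : ℕ → S), i ∈ I →
          (∀ j ∈ J, 0 ≤ q j) ∧ (∑ j ∈ J, q j) = 1 ∧
          Δ' i = (∑ j ∈ J, q j • point (s j)) ∧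
          Θ' i = (∑ j ∈ J, q j • point (t j)) ∧
          (∀ j ∈ J, R (s j) (t j)) := by
        intro i
        by_cases hi : i ∈ I
        · obtain ⟨J, q, s, t, h⟩ := ih i hi
          exact ⟨J, q, s, t, fun _ => h⟩
        · exact ⟨∅, fun _ => 0, fun _ => Classical.arbitrary _ , fun _ => Classical.arbitrary _,
            fun h => absurd h hi⟩
      choose J q s t hall using ih'
      classical
      refine ⟨I.biUnion (fun i => (J i).image (Nat.pair i)),
        fun k => p k.unpair.1 * q k.unpair.1 k.unpair.2,
        fun k => s k.unpair.1 k.unpair.2,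
        fun k => t k.unpair.1 k.unpair.2, ?_, ?_, ?_, ?_, ?_⟩
      · intro k hk
        simp only [Finset.mem_biUnion, Finset.mem_image] at hk
        obtain ⟨i, hi, j, hj, rfl⟩ := hk
        simp only [Nat.unpair_pair]
        exact mul_nonneg (hp i hi) ((hall i hi).1 j hj)
      · rw [Finset.sum_biUnion (pair_disjoint I J)]
        rw [← hp1]
        refine Finset.sum_congr rfl fun i hi => ?_
        rw [Finset.sum_image (by intro a _ b _ h; simpa using congrArg (fun n => n.unpair.2) h)]
        simp only [Nat.unpair_pair]
        rw [← Finset.mul_sum, (hall i hi).2.1, mul_one]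
      · rw [Finset.sum_biUnion (pair_disjoint I J)]
        refine Finset.sum_congr rfl fun i hi => ?_
        rw [Finset.sum_image (by intro a _ b _ h; simpa using congrArg (fun n => n.unpair.2) h)]
        simp only [Nat.unpair_pair]
        rw [(hall i hi).2.2.1, Finset.smul_sum]
        refine Finset.sum_congr rfl fun j _ => ?_
        rw [smul_smul]
      · rw [Finset.sum_biUnion (pair_disjoint I J)]
        refine Finset.sum_congr rfl fun i hi => ?_
        rw [Finset.sum_image (by intro a _ b _ h; simpa using congrArg (fun n => n.unpair.2) h)]
        simp only [Nat.unpair_pair]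
        rw [(hall i hi).2.2.2.1, Finset.smul_sum]
        refine Finset.sum_congr rfl fun j _ => ?_
        rw [smul_smul]
      · intro k hk
        simp only [Finset.mem_biUnion, Finset.mem_image] at hk
        obtain ⟨i, hi, j, hj, rfl⟩ := hk
        simp only [Nat.unpair_pair]
        exact (hall i hi).2.2.2.2 j hj
  · rintro ⟨I, p, s, t, hp, hp1, rfl, rfl, hR⟩
    exact Lift.lin I p (fun i => point (s i)) (fun i => point (t i)) hp hp1
      (fun i hi => Lift.pt ⟨t i, hR i hi, rfl⟩)
end

section
/- If relations R₁, R₂ ⊆ D(S) × D(S) on distributions are both linear (closed under finite convex combinations) and left-decomposable, then their relational composition R₁ ∘ R₂ is also linear and left-decomposable. -/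
open BigOperators

/-- A relation on distributions is linear if it is closed under finite convex combinations. -/
def Linear {S : Type} (R : PDist S → PDist S → Prop) : Prop :=
  ∀ (I : Finset ℕ) (p : ℕ → ℝ) (Δ Θ : ℕ → PDist S),
    (∀ i ∈ I, 0 ≤ p i) → (∑ i ∈ I, p i) = 1 →
    (∀ i ∈ I, R (Δ i) (Θ i)) →
    R (∑ i ∈ I, p i • Δ i) (∑ i ∈ I, p i • Θ i)

/-- A relation on distributions is left-decomposable if any convex decomposition of the
left-hand side induces a matching decomposition of the right-hand side. -/
def LeftDecomp {S : Type} (R : PDist S → PDist S → Prop) : Prop :=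
  ∀ (I : Finset ℕ) (p : ℕ → ℝ) (Δ : ℕ → PDist S) (Θ : PDist S),
    (∀ i ∈ I, 0 ≤ p i) → (∑ i ∈ I, p i) = 1 →
    R (∑ i ∈ I, p i • Δ i) Θ →
    ∃ Θi : ℕ → PDist S, Θ = (∑ i ∈ I, p i • Θi i) ∧ ∀ i ∈ I, R (Δ i) (Θi i)

/-- Linearity and left-decomposability are preserved by relational composition. -/
theorem comp_linear_leftDecomp {S : Type} (R₁ R₂ : PDist S → PDist S → Prop)
    (h₁l : Linear R₁) (h₁d : LeftDecomp R₁) (h₂l : Linear R₂) (h₂d : LeftDecomp R₂) :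
    Linear (Relation.Comp R₁ R₂) ∧ LeftDecomp (Relation.Comp R₁ R₂) := by
  constructor
  · intro I p Δ Θ hp hsum hR
    have h : ∀ i ∈ I, ∃ Λ, R₁ (Δ i) Λ ∧ R₂ Λ (Θ i) := hR
    choose Λ hΛ using h
    classical
    refine ⟨∑ i ∈ I, p i • (if h : i ∈ I then Λ i h else 0), ?_, ?_⟩
    · have := h₁l I p Δ (fun i => if h : i ∈ I then Λ i h else 0) hp hsum
        (fun i hi => by simp [hi, (hΛ i hi).1])
      exact this
    · have := h₂l I p (fun i => if h : i ∈ I then Λ i h else 0) Θ hp hsum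
        (fun i hi => by simp [hi, (hΛ i hi).2])
      exact this
  · intro I p Δ Θ hp hsum hR
    obtain ⟨Λ, hΛ1, hΛ2⟩ := hR
    obtain ⟨Λi, rfl, hΛi⟩ := h₁d I p Δ Λ hp hsum hΛ1
    obtain ⟨Θi, rfl, hΘi⟩ := h₂d I p Λi Θ hp hsum hΛ2
    exact ⟨Θi, rfl, fun i hi => ⟨Λi i, hΛi i hi, hΘi i hi⟩⟩
end

section
/- In a pLTS, if ≈ is the largest weak (open) bisimulation between configurations, Δ lift(≈) Θ, and Δ →^α Δ' (lifted transition), then there exists Θ' with Θ ⟹^α̂ Θ' and Δ' lift(≈) Θ'. (Transfer property of bisimilarity to lifted distributions.) -/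
open BigOperators

/-- A probabilistic labelled transition system; `none` is the internal action τ. -/
structure PLTS (S Act : Type) where
  trans : S → Option Act → PDist S → Prop

/-- The "hatted" relation: `s →^τ̂ Δ` iff `s →^τ Δ` or `Δ = δ_s`;
for visible actions it coincides with the transition relation. -/
def hatT {S Act : Type} (L : PLTS S Act) (α : Option Act) (s : S) (Δ : PDist S) : Prop :=
  L.trans s α Δ ∨ (α = none ∧ Δ = point s)

/-- The reflexive-transitive closure of the lifted τ̂-relation on distributions. -/
def weakTau {S Act : Type} (L : PLTS S Act) : PDist S → PDist S → Prop :=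
  Relation.ReflTransGen (Lift (hatT L none))

/-- The lifted strong transition relation on distributions for a fixed label. -/
def strongL {S Act : Type} (L : PLTS S Act) (α : Option Act) : PDist S → PDist S → Prop :=
  Lift (fun s Δ => L.trans s α Δ)

/-- Weak transitions: `⟹^τ̂` for τ, and `⟹^τ̂ · →^a · ⟹^τ̂` for visible actions. -/
def weak {S Act : Type} (L : PLTS S Act) : Option Act → PDist S → PDist S → Prop
  | none => weakTau L
  | some a => fun Δ Θ =>
      ∃ Δ₁ Δ₂, weakTau L Δ Δ₁ ∧ strongL L (some a) Δ₁ Δ₂ ∧ weakTau L Δ₂ Θ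

/-- `R` is a weak bisimulation: strong transitions on either side are matched by
weak transitions of the other, modulo the lifting of `R`. -/
def IsWeakBisim {S Act : Type} (L : PLTS S Act) (R : S → S → Prop) : Prop :=
  ∀ s t, R s t →
    (∀ α Δ, L.trans s α Δ → ∃ Θ, weak L α (point t) Θ ∧ liftRel R Δ Θ) ∧
    (∀ α Δ, L.trans t α Δ → ∃ Θ, weak L α (point s) Θ ∧ liftRel R Θ Δ)

/-- Weak bisimilarity: the largest weak bisimulation (union of all of them). -/
def Bisim {S Act : Type} (L : PLTS S Act) (s t : S) : Prop :=
  ∃ R, IsWeakBisim L R ∧ R s t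

lemma exists_reindex' {ι : Type} [Inhabited ι] (I : Finset ι) :
    ∃ (n : ℕ) (g : ℕ → ι), (∀ j < n, g j ∈ I) ∧
      ∀ (M : Type) [AddCommMonoid M] (f : ι → M), ∑ i ∈ I, f i = ∑ j ∈ Finset.range n, f (g j) := by
  induction I using Finset.cons_induction with
  | empty => exact ⟨0, fun _ => default, by omega, by simp⟩
  | cons a s ha ih =>
    obtain ⟨n, g, hg, hsum⟩ := ih
    refine ⟨n + 1, fun j => if j = 0 then a else g (j - 1), ?_, ?_⟩
    · intro j hj
      by_cases h0 : j = 0 <;> simp [h0, Finset.mem_cons]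
      · exact Or.inr (hg (j-1) (by omega))
    · intro M _ f
      rw [Finset.sum_cons, hsum M f, Finset.sum_range_succ']
      simp [add_comm]

lemma exists_reindex {ι : Type} (I : Finset ι) (hI : I.Nonempty) :
    ∃ (n : ℕ) (g : ℕ → ι), (∀ j < n, g j ∈ I) ∧
      ∀ (M : Type) [AddCommMonoid M] (f : ι → M), ∑ i ∈ I, f i = ∑ j ∈ Finset.range n, f (g j) := by
  have : Inhabited ι := ⟨hI.choose⟩
  exact exists_reindex' I

lemma Lift.lin'' {S : Type} {R : S → PDist S → Prop} {ι : Type} (I : Finset ι)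
    (p : ι → ℝ) (Δ Θ : ι → PDist S)
    (h0 : ∀ i ∈ I, 0 ≤ p i) (h1 : ∑ i ∈ I, p i = 1)
    (h : ∀ i ∈ I, Lift R (Δ i) (Θ i)) :
    Lift R (∑ i ∈ I, p i • Δ i) (∑ i ∈ I, p i • Θ i) := by
  have hne : I.Nonempty := by
    rcases I.eq_empty_or_nonempty with h' | h'
    · simp [h'] at h1
    · exact h'
  obtain ⟨n, g, hg, hsum⟩ := exists_reindex I hne
  rw [hsum (PDist S) (fun i => p i • Δ i), hsum (PDist S) (fun i => p i • Θ i)]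
  exact Lift.lin (Finset.range n) (fun j => p (g j)) (fun j => Δ (g j)) (fun j => Θ (g j))
    (fun j hj => h0 _ (hg j (Finset.mem_range.mp hj)))
    (by rw [← hsum ℝ p]; exact h1)
    (fun j hj => h _ (hg j (Finset.mem_range.mp hj)))

lemma Lift.mono {S : Type} {R R' : S → PDist S → Prop} (hRR : ∀ s Θ, R s Θ → R' s Θ)
    {Δ Θ : PDist S} (h : Lift R Δ Θ) : Lift R' Δ Θ := by
  induction h with
  | pt h => exact Lift.pt (hRR _ _ h)
  | lin I p Δ Θ h0 h1 h ih => exact Lift.lin I p Δ Θ h0 h1 ih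

lemma chain_rtg {α : Type} {r : α → α → Prop} :
    ∀ (n : ℕ) (f : ℕ → α), (∀ m < n, r (f m) (f (m+1))) →
      Relation.ReflTransGen r (f 0) (f n) := by
  intro n
  induction n with
  | zero => exact fun f _ => .refl
  | succ k ih =>
    intro f h
    exact (ih f (fun m hm => h m (by omega))).tail (h k (by omega))

lemma rtg_chain {α : Type} {r : α → α → Prop} {x y : α} (h : Relation.ReflTransGen r x y) :
    ∃ (n : ℕ) (f : ℕ → α), f 0 = x ∧ f n = y ∧ ∀ m < n, r (f m) (f (m+1)) := by
  induction h with
  | refl => exact ⟨0, fun _ => x, rfl, rfl, by omega⟩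
  | @tail b c _ hbc ih =>
    obtain ⟨n, f, hf0, hfn, hstep⟩ := ih
    refine ⟨n + 1, fun m => if m ≤ n then f m else c, by simp [hf0], by simp, ?_⟩
    intro m hm
    by_cases hm' : m < n
    · simp only [if_pos (by omega : m ≤ n), if_pos (by omega : m + 1 ≤ n)]
      exact hstep m hm'
    · have : m = n := by omega
      subst this
      simp only [if_pos le_rfl, if_neg (by omega : ¬ m + 1 ≤ m)]
      rw [hfn]; exact hbc

lemma lift_canon {S : Type} {R : S → PDist S → Prop} {Δ Θ : PDist S} (h : Lift R Δ Θ) :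
    ∃ (n : ℕ) (q : ℕ → ℝ) (s : ℕ → S) (F : ℕ → PDist S),
      (∀ j < n, 0 < q j) ∧ (∑ j ∈ Finset.range n, q j) = 1 ∧ (∀ j < n, R (s j) (F j)) ∧
      Δ = ∑ j ∈ Finset.range n, q j • point (s j) ∧ Θ = ∑ j ∈ Finset.range n, q j • F j := by
  induction h with
  | @pt s Θ h =>
    exact ⟨1, fun _ => 1, fun _ => s, fun _ => Θ, by norm_num, by simp, fun _ _ => h,
      by simp, by simp⟩
  | lin I p Δf Θf hp h1 _ ih =>
    classical
    have hIne : I.Nonempty := by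
      rcases I.eq_empty_or_nonempty with h' | h'
      · simp [h'] at h1
      · exact h'
    have hSne : Nonempty S := by
      obtain ⟨i₀, hi₀⟩ := hIne
      obtain ⟨_, _, st, _, _⟩ := ih i₀ hi₀
      exact ⟨st 0⟩
    have : Inhabited S := Classical.inhabited_of_nonempty hSne
    have ih' : ∀ i, ∃ (n : ℕ) (q : ℕ → ℝ) (st : ℕ → S) (F : ℕ → PDist S),
        i ∈ I → ((∀ j < n, 0 < q j) ∧ (∑ j ∈ Finset.range n, q j) = 1 ∧
          (∀ j < n, R (st j) (F j)) ∧
          Δf i = ∑ j ∈ Finset.range n, q j • point (st j) ∧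
          Θf i = ∑ j ∈ Finset.range n, q j • F j) := by
      intro i
      by_cases hi : i ∈ I
      · obtain ⟨n, q, st, F, h⟩ := ih i hi
        exact ⟨n, q, st, F, fun _ => h⟩
      · exact ⟨0, 0, fun _ => default, 0, fun h => absurd h hi⟩
    choose n q st F hall using ih'
    set I' : Finset ℕ := I.filter (fun i => 0 < p i) with hI'
    have hmem : ∀ i ∈ I', i ∈ I := fun i hi => (Finset.mem_filter.mp hi).1
    have hppos : ∀ i ∈ I', 0 < p i := fun i hi => (Finset.mem_filter.mp hi).2
    have hsum1 : ∑ i ∈ I', p i = 1 := by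
      rw [← h1]
      exact Finset.sum_filter_of_ne (fun i hi hne => lt_of_le_of_ne (hp i hi) (Ne.symm hne))
    have hΔeq : ∑ i ∈ I, p i • Δf i = ∑ i ∈ I', p i • Δf i := by
      symm
      refine Finset.sum_filter_of_ne (fun i hi hne => ?_)
      rcases (hp i hi).lt_or_eq with h' | h'
      · exact h'
      · exact absurd (by rw [← h', zero_smul]) hne
    have hΘeq : ∑ i ∈ I, p i • Θf i = ∑ i ∈ I', p i • Θf i := by
      symm
      refine Finset.sum_filter_of_ne (fun i hi hne => ?_)
      rcases (hp i hi).lt_or_eq with h' | h'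
      · exact h'
      · exact absurd (by rw [← h', zero_smul]) hne
    set T : Finset ((_ : ℕ) × ℕ) := I'.sigma (fun i => Finset.range (n i)) with hT
    set w : (Σ _ : ℕ, ℕ) → ℝ := fun σ => p σ.1 * q σ.1 σ.2 with hw
    set sts : (Σ _ : ℕ, ℕ) → S := fun σ => st σ.1 σ.2 with hsts
    set G : (Σ _ : ℕ, ℕ) → PDist S := fun σ => F σ.1 σ.2 with hG
    have hTmem : ∀ σ ∈ T, σ.1 ∈ I' ∧ σ.2 < n σ.1 := by
      intro σ hσ
      obtain ⟨h1', h2'⟩ := Finset.mem_sigma.mp hσ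
      exact ⟨h1', Finset.mem_range.mp h2'⟩
    have hwpos : ∀ σ ∈ T, 0 < w σ := by
      intro σ hσ
      obtain ⟨ha, hb⟩ := hTmem σ hσ
      exact mul_pos (hppos _ ha) (((hall σ.1 (hmem _ ha)).1) σ.2 hb)
    have hwsum : ∑ σ ∈ T, w σ = 1 := by
      rw [hT, Finset.sum_sigma]
      calc ∑ i ∈ I', ∑ j ∈ Finset.range (n i), p i * q i j
          = ∑ i ∈ I', p i := by
            refine Finset.sum_congr rfl (fun i hi => ?_)
            rw [← Finset.mul_sum, (hall i (hmem _ hi)).2.1, mul_one]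
        _ = 1 := hsum1
    have hRT : ∀ σ ∈ T, R (sts σ) (G σ) := by
      intro σ hσ
      obtain ⟨ha, hb⟩ := hTmem σ hσ
      exact (hall σ.1 (hmem _ ha)).2.2.1 σ.2 hb
    have hΔT : ∑ i ∈ I, p i • Δf i = ∑ σ ∈ T, w σ • point (sts σ) := by
      rw [hΔeq, hT, Finset.sum_sigma]
      refine Finset.sum_congr rfl (fun i hi => ?_)
      rw [(hall i (hmem _ hi)).2.2.2.1, Finset.smul_sum]
      exact Finset.sum_congr rfl (fun j _ => smul_smul _ _ _)
    have hΘT : ∑ i ∈ I, p i • Θf i = ∑ σ ∈ T, w σ • G σ := by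
      rw [hΘeq, hT, Finset.sum_sigma]
      refine Finset.sum_congr rfl (fun i hi => ?_)
      rw [(hall i (hmem _ hi)).2.2.2.2, Finset.smul_sum]
      exact Finset.sum_congr rfl (fun j _ => smul_smul _ _ _)
    have hTne : T.Nonempty := by
      rcases T.eq_empty_or_nonempty with h' | h'
      · rw [h'] at hwsum; simp at hwsum
      · exact h'
    obtain ⟨N, g, hg, hsum⟩ := exists_reindex T hTne
    refine ⟨N, fun j => w (g j), fun j => sts (g j), fun j => G (g j),
      fun j hj => hwpos _ (hg j hj), ?_, fun j hj => hRT _ (hg j hj), ?_, ?_⟩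
    · rw [← hsum ℝ w]; exact hwsum
    · rw [hΔT]; exact hsum (PDist S) (fun σ => w σ • point (sts σ))
    · rw [hΘT]; exact hsum (PDist S) (fun σ => w σ • G σ)

/-- evaluation of a combination of point distributions -/
lemma eval_sum_point {S : Type} [DecidableEq S] (J : Finset ℕ) (q : ℕ → ℝ) (v : ℕ → S) (x : S) :
    (∑ j ∈ J, q j • point (v j)) x = ∑ j ∈ J.filter (fun j => v j = x), q j := by
  classical
  rw [Finset.sum_apply']
  rw [Finset.sum_filter]
  refine Finset.sum_congr rfl (fun j _ => ?_)
  rw [Finsupp.smul_apply, point, Finsupp.single_apply]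
  by_cases h : v j = x <;> simp [h]

/-- total mass of a combination of point distributions is the sum of weights -/
lemma mass_sum_point {S : Type} (J : Finset ℕ) (q : ℕ → ℝ) (v : ℕ → S) :
    ((∑ j ∈ J, q j • point (v j)).sum fun _ x => x) = ∑ j ∈ J, q j := by
  classical
  have T := Finsupp.linearCombination ℝ (fun _ : S => (1:ℝ))
  have key : ∀ (Δ : PDist S), (Δ.sum fun _ x => x) =
      Finsupp.linearCombination ℝ (fun _ : S => (1:ℝ)) Δ := by
    intro Δ
    rw [Finsupp.linearCombination_apply]
    simp [Finsupp.sum]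
  rw [key, map_sum]
  refine Finset.sum_congr rfl (fun j _ => ?_)
  rw [map_smul, point, Finsupp.linearCombination_single, smul_eq_mul, smul_eq_mul, mul_one, mul_one]

/-- nonnegativity of a nonneg combination of point distributions -/
lemma nonneg_sum_point {S : Type} (J : Finset ℕ) (q : ℕ → ℝ) (v : ℕ → S)
    (hq : ∀ j ∈ J, 0 ≤ q j) (x : S) : 0 ≤ (∑ j ∈ J, q j • point (v j)) x := by
  classical
  rw [eval_sum_point]
  exact Finset.sum_nonneg (fun j hj => hq j (Finset.mem_filter.mp hj).1)

/-- a genuine distribution equals the convex combination of points over its support -/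
lemma dist_eq_sum_point {S : Type} (B : PDist S) :
    B = ∑ x ∈ B.support, B x • point x := by
  classical
  ext a
  rw [Finset.sum_apply']
  by_cases ha : a ∈ B.support
  · rw [Finset.sum_eq_single a]
    · simp [point, Finsupp.single_apply]
    · intro b _ hba
      simp [point, Finsupp.single_apply, hba]
    · intro h; exact absurd ha h
  · have : B a = 0 := Finsupp.notMem_support_iff.mp ha
    rw [this]
    symm
    refine Finset.sum_eq_zero (fun b hb => ?_)
    have hba : b ≠ a := fun h => ha (h ▸ hb)
    simp [point, Finsupp.single_apply, hba]

lemma lift_refl_point {S Act : Type} (L : PLTS S Act) (s : S) :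
    Lift (hatT L none) (point s) (point s) :=
  Lift.pt (Or.inr ⟨rfl, rfl⟩)

lemma lift_refl_of_dist {S Act : Type} (L : PLTS S Act) (B : PDist S)
    (hpos : ∀ x, 0 ≤ B x) (hmass : ∑ x ∈ B.support, B x = 1) :
    Lift (hatT L none) B B := by
  classical
  have hB := dist_eq_sum_point B
  rw [hB]
  exact Lift.lin'' B.support B (fun x => point x) (fun x => point x)
    (fun x _ => hpos x) hmass (fun x _ => lift_refl_point L x)

/-- combine weakTau chains, padding at the end (requires refl at the targets) -/
lemma weakTau_linear_end {S Act : Type} (L : PLTS S Act) {ι : Type} (I : Finset ι)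
    (p : ι → ℝ) (X Y : ι → PDist S)
    (h0 : ∀ i ∈ I, 0 ≤ p i) (h1 : ∑ i ∈ I, p i = 1)
    (hw : ∀ i ∈ I, weakTau L (X i) (Y i))
    (hr : ∀ i ∈ I, Lift (hatT L none) (Y i) (Y i)) :
    weakTau L (∑ i ∈ I, p i • X i) (∑ i ∈ I, p i • Y i) := by
  classical
  have hc : ∀ i, ∃ (n : ℕ) (f : ℕ → PDist S), i ∈ I →
      (f 0 = X i ∧ f n = Y i ∧ ∀ m < n, Lift (hatT L none) (f m) (f (m+1))) := by
    intro i
    by_cases hi : i ∈ I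
    · obtain ⟨n, f, h⟩ := rtg_chain (hw i hi)
      exact ⟨n, f, fun _ => h⟩
    · exact ⟨0, fun _ => 0, fun h => absurd h hi⟩
  choose n f hf using hc
  set N := I.sup n with hN
  set F : ℕ → PDist S := fun m => ∑ i ∈ I, p i • f i (min m (n i)) with hF
  have hF0 : F 0 = ∑ i ∈ I, p i • X i := by
    refine Finset.sum_congr rfl (fun i hi => ?_)
    rw [Nat.min_eq_left (Nat.zero_le _), (hf i hi).1]
  have hFN : F N = ∑ i ∈ I, p i • Y i := by
    refine Finset.sum_congr rfl (fun i hi => ?_)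
    rw [Nat.min_eq_right (Finset.le_sup hi), (hf i hi).2.1]
  have hstep : ∀ m < N, Lift (hatT L none) (F m) (F (m+1)) := by
    intro m _
    refine Lift.lin'' I p (fun i => f i (min m (n i))) (fun i => f i (min (m+1) (n i))) h0 h1 ?_
    intro i hi
    by_cases hm : m < n i
    · have e1 : min m (n i) = m := by omega
      have e2 : min (m+1) (n i) = m+1 := by omega
      rw [e1, e2]
      exact (hf i hi).2.2 m hm
    · have e1 : min m (n i) = n i := by omega
      have e2 : min (m+1) (n i) = n i := by omega
      rw [e1, e2, (hf i hi).2.1]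
      exact hr i hi
  have := chain_rtg N F hstep
  rw [hF0, hFN] at this
  exact this

/-- combine weakTau chains, padding at the front (requires refl at the sources) -/
lemma weakTau_linear_front {S Act : Type} (L : PLTS S Act) {ι : Type} (I : Finset ι)
    (p : ι → ℝ) (X Y : ι → PDist S)
    (h0 : ∀ i ∈ I, 0 ≤ p i) (h1 : ∑ i ∈ I, p i = 1)
    (hw : ∀ i ∈ I, weakTau L (X i) (Y i))
    (hr : ∀ i ∈ I, Lift (hatT L none) (X i) (X i)) :
    weakTau L (∑ i ∈ I, p i • X i) (∑ i ∈ I, p i • Y i) := by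
  classical
  have hc : ∀ i, ∃ (n : ℕ) (f : ℕ → PDist S), i ∈ I →
      (f 0 = X i ∧ f n = Y i ∧ ∀ m < n, Lift (hatT L none) (f m) (f (m+1))) := by
    intro i
    by_cases hi : i ∈ I
    · obtain ⟨n, f, h⟩ := rtg_chain (hw i hi)
      exact ⟨n, f, fun _ => h⟩
    · exact ⟨0, fun _ => 0, fun h => absurd h hi⟩
  choose n f hf using hc
  set N := I.sup n with hN
  set F : ℕ → PDist S := fun m => ∑ i ∈ I, p i • f i (m - (N - n i)) with hF
  have hF0 : F 0 = ∑ i ∈ I, p i • X i := by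
    refine Finset.sum_congr rfl (fun i hi => ?_)
    rw [Nat.zero_sub, (hf i hi).1]
  have hFN : F N = ∑ i ∈ I, p i • Y i := by
    refine Finset.sum_congr rfl (fun i hi => ?_)
    have : N - (N - n i) = n i := by
      have := Finset.le_sup (f := n) hi
      omega
    rw [this, (hf i hi).2.1]
  have hstep : ∀ m < N, Lift (hatT L none) (F m) (F (m+1)) := by
    intro m hm
    refine Lift.lin'' I p (fun i => f i (m - (N - n i))) (fun i => f i (m + 1 - (N - n i))) h0 h1 ?_
    intro i hi
    have hle := Finset.le_sup (f := n) hi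
    by_cases hm' : m < N - n i
    · have e1 : m - (N - n i) = 0 := by omega
      have e2 : m + 1 - (N - n i) = 0 := by omega
      rw [e1, e2, (hf i hi).1]
      exact hr i hi
    · have e2 : m + 1 - (N - n i) = (m - (N - n i)) + 1 := by omega
      rw [e2]
      exact (hf i hi).2.2 _ (by omega)
  have := chain_rtg N F hstep
  rw [hF0, hFN] at this
  exact this

/-- linearity of the weak transition relation -/
lemma weak_linear {S Act : Type} (L : PLTS S Act) (α : Option Act) {ι : Type} (I : Finset ι)
    (p : ι → ℝ) (X Y : ι → PDist S)
    (h0 : ∀ i ∈ I, 0 ≤ p i) (h1 : ∑ i ∈ I, p i = 1)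
    (hw : ∀ i ∈ I, weak L α (X i) (Y i))
    (hrX : ∀ i ∈ I, Lift (hatT L none) (X i) (X i))
    (hrY : ∀ i ∈ I, Lift (hatT L none) (Y i) (Y i)) :
    weak L α (∑ i ∈ I, p i • X i) (∑ i ∈ I, p i • Y i) := by
  classical
  cases α with
  | none => exact weakTau_linear_end L I p X Y h0 h1 hw hrY
  | some a =>
    have hc : ∀ i, ∃ (D₁ D₂ : PDist S), i ∈ I →
        (weakTau L (X i) D₁ ∧ strongL L (some a) D₁ D₂ ∧ weakTau L D₂ (Y i)) := by
      intro i
      by_cases hi : i ∈ I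
      · obtain ⟨D₁, D₂, h⟩ := hw i hi
        exact ⟨D₁, D₂, fun _ => h⟩
      · exact ⟨0, 0, fun h => absurd h hi⟩
    choose D₁ D₂ hD using hc
    refine ⟨∑ i ∈ I, p i • D₁ i, ∑ i ∈ I, p i • D₂ i, ?_, ?_, ?_⟩
    · exact weakTau_linear_front L I p X D₁ h0 h1 (fun i hi => (hD i hi).1) hrX
    · exact Lift.lin'' I p D₁ D₂ h0 h1 (fun i hi => (hD i hi).2.1)
    · exact weakTau_linear_end L I p D₂ Y h0 h1 (fun i hi => (hD i hi).2.2) hrY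

/-- the right-hand side of a `liftRel` is a genuine distribution, hence τ̂-reflexive -/
lemma liftRel_right_refl {S Act : Type} (L : PLTS S Act) {R : S → S → Prop}
    {Δ Θ : PDist S} (h : liftRel R Δ Θ) : Lift (hatT L none) Θ Θ := by
  classical
  obtain ⟨n, q, s, F, hqpos, hq1, hRel, _, hΘ⟩ := lift_canon h
  have : Inhabited S := ⟨s 0⟩
  have hv : ∀ j, ∃ v, j < n → F j = point v := by
    intro j
    by_cases hj : j < n
    · obtain ⟨t', _, ht'⟩ := hRel j hj
      exact ⟨t', fun _ => ht'⟩
    · exact ⟨default, fun h' => absurd h' hj⟩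
  choose v hvF using hv
  have hΘ' : Θ = ∑ j ∈ Finset.range n, q j • point (v j) := by
    rw [hΘ]
    exact Finset.sum_congr rfl fun j hj => by rw [hvF j (Finset.mem_range.mp hj)]
  rw [hΘ']
  refine lift_refl_of_dist L _ ?_ ?_
  · exact nonneg_sum_point _ _ _ (fun j hj => (hqpos j (Finset.mem_range.mp hj)).le)
  · exact (mass_sum_point _ _ _).trans hq1

/-- Transfer property: a lifted strong transition from `Δ` is matched by a weak
transition from any `Θ` with `Δ lift(≈) Θ`, up to `lift(≈)`. -/
theorem bisim_transfer {S Act : Type} (L : PLTS S Act) (α : Option Act)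
    (Δ Θ Δ' : PDist S) (h : liftRel (Bisim L) Δ Θ) (hstep : strongL L α Δ Δ') :
    ∃ Θ', weak L α Θ Θ' ∧ liftRel (Bisim L) Δ' Θ' := by
  classical
  obtain ⟨nI, p, s, tF, hppos, hp1, hRel, hΔI, hΘI⟩ := lift_canon h
  obtain ⟨nK, r, u, D, hrpos, hr1, htrans, hΔK, hΔ'⟩ := lift_canon hstep
  have : Inhabited S := ⟨s 0⟩
  -- extract bisimilar partners
  have hv : ∀ i, ∃ t, i < nI → (Bisim L (s i) t ∧ tF i = point t) := by
    intro i
    by_cases hi : i < nI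
    · obtain ⟨t', hb, ht'⟩ := hRel i hi
      exact ⟨t', fun _ => ⟨hb, ht'⟩⟩
    · exact ⟨default, fun h' => absurd h' hi⟩
  choose t ht using hv
  have hΘI' : Θ = ∑ i ∈ Finset.range nI, p i • point (t i) := by
    rw [hΘI]
    exact Finset.sum_congr rfl fun i hi => by rw [(ht i (Finset.mem_range.mp hi)).2]
  -- evaluation facts
  have hΔx : ∀ x, Δ x = ∑ i ∈ (Finset.range nI).filter (fun i => s i = x), p i := by
    intro x; rw [hΔI]; exact eval_sum_point _ _ _ _
  have hΔx' : ∀ x, Δ x = ∑ k ∈ (Finset.range nK).filter (fun k => u k = x), r k := by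
    intro x; rw [hΔK]; exact eval_sum_point _ _ _ _
  have hΔspos : ∀ i, i < nI → 0 < Δ (s i) := by
    intro i hi
    rw [hΔx (s i)]
    have hmem : i ∈ (Finset.range nI).filter (fun i' => s i' = s i) := by
      simp [Finset.mem_filter, Finset.mem_range, hi]
    calc (0:ℝ) < p i := hppos i hi
      _ ≤ _ := Finset.single_le_sum
          (fun j hj => (hppos j (Finset.mem_range.mp (Finset.mem_filter.mp hj).1)).le) hmem
  have hΔupos : ∀ k, k < nK → 0 < Δ (u k) := by
    intro k hk
    rw [hΔx' (u k)]
    have hmem : k ∈ (Finset.range nK).filter (fun k' => u k' = u k) := by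
      simp [Finset.mem_filter, Finset.mem_range, hk]
    calc (0:ℝ) < r k := hrpos k hk
      _ ≤ _ := Finset.single_le_sum
          (fun j hj => (hrpos j (Finset.mem_range.mp (Finset.mem_filter.mp hj).1)).le) hmem
  -- the pair index set and weights
  set P : Finset (ℕ × ℕ) :=
    (Finset.range nI ×ˢ Finset.range nK).filter (fun ik => s ik.1 = u ik.2) with hP
  set c : ℕ × ℕ → ℝ := fun ik => p ik.1 * r ik.2 / Δ (s ik.1) with hc
  have hPmem : ∀ ik ∈ P, ik.1 < nI ∧ ik.2 < nK ∧ s ik.1 = u ik.2 := by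
    intro ik hik
    obtain ⟨h1, h2⟩ := Finset.mem_filter.mp hik
    obtain ⟨ha, hb⟩ := Finset.mem_product.mp h1
    exact ⟨Finset.mem_range.mp ha, Finset.mem_range.mp hb, h2⟩
  have hcpos : ∀ ik ∈ P, 0 ≤ c ik := by
    intro ik hik
    obtain ⟨h1, h2, _⟩ := hPmem ik hik
    exact div_nonneg (mul_nonneg (hppos _ h1).le (hrpos _ h2).le) (hΔspos _ h1).le
  -- bisimulation responses
  have hres : ∀ ik, ∃ W, ik ∈ P →
      (weak L α (point (t ik.1)) W ∧ liftRel (Bisim L) (D ik.2) W) := by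
    intro ik
    by_cases hik : ik ∈ P
    · obtain ⟨h1, h2, h3⟩ := hPmem ik hik
      obtain ⟨R, hRbis, hRst⟩ := (ht ik.1 h1).1
      have htr : L.trans (s ik.1) α (D ik.2) := by rw [h3]; exact htrans ik.2 h2
      obtain ⟨W, hwW, hlW⟩ := (hRbis _ _ hRst).1 α (D ik.2) htr
      refine ⟨W, fun _ => ⟨hwW, ?_⟩⟩
      exact Lift.mono (fun s' Θ' ⟨t', hr', he'⟩ => ⟨t', ⟨R, hRbis, hr'⟩, he'⟩) hlW
    · exact ⟨0, fun h' => absurd h' hik⟩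
  choose W hW using hres
  -- grouping of sums over P
  have hgroup1 : ∀ (M : Type) [AddCommMonoid M] (f : ℕ × ℕ → M),
      ∑ ik ∈ P, f ik = ∑ i ∈ Finset.range nI,
        ∑ k ∈ (Finset.range nK).filter (fun k => u k = s i), f (i, k) := by
    intro M _ f
    rw [hP, Finset.sum_filter, Finset.sum_product]
    refine Finset.sum_congr rfl fun i _ => ?_
    rw [Finset.sum_filter]
    exact Finset.sum_congr rfl fun k _ => by
      by_cases h' : s i = u k
      · rw [if_pos h', if_pos h'.symm]
      · rw [if_neg h', if_neg (Ne.symm h')]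
  have hgroup2 : ∀ (M : Type) [AddCommMonoid M] (f : ℕ × ℕ → M),
      ∑ ik ∈ P, f ik = ∑ k ∈ Finset.range nK,
        ∑ i ∈ (Finset.range nI).filter (fun i => s i = u k), f (i, k) := by
    intro M _ f
    rw [hP, Finset.sum_filter, Finset.sum_product_right]
    refine Finset.sum_congr rfl fun k _ => ?_
    rw [Finset.sum_filter]
  -- inner sums
  have hinner1 : ∀ i, i < nI →
      ∑ k ∈ (Finset.range nK).filter (fun k => u k = s i), c (i, k) = p i := by
    intro i hi
    have hne := (hΔspos i hi).ne'
    calc ∑ k ∈ (Finset.range nK).filter (fun k => u k = s i), c (i, k)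
        = ∑ k ∈ (Finset.range nK).filter (fun k => u k = s i), r k * (p i / Δ (s i)) := by
          refine Finset.sum_congr rfl fun k _ => ?_
          rw [hc]; ring
      _ = (∑ k ∈ (Finset.range nK).filter (fun k => u k = s i), r k) * (p i / Δ (s i)) := by
          rw [Finset.sum_mul]
      _ = Δ (s i) * (p i / Δ (s i)) := by rw [← hΔx' (s i)]
      _ = p i := by field_simp
  have hinner2 : ∀ k, k < nK →
      ∑ i ∈ (Finset.range nI).filter (fun i => s i = u k), c (i, k) = r k := by
    intro k hk
    have hne := (hΔupos k hk).ne'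
    calc ∑ i ∈ (Finset.range nI).filter (fun i => s i = u k), c (i, k)
        = ∑ i ∈ (Finset.range nI).filter (fun i => s i = u k), p i * (r k / Δ (u k)) := by
          refine Finset.sum_congr rfl fun i hi => ?_
          have hsi : s i = u k := (Finset.mem_filter.mp hi).2
          rw [hc]; dsimp only; rw [hsi]; ring
      _ = (∑ i ∈ (Finset.range nI).filter (fun i => s i = u k), p i) * (r k / Δ (u k)) := by
          rw [Finset.sum_mul]
      _ = Δ (u k) * (r k / Δ (u k)) := by rw [← hΔx (u k)]
      _ = r k := by field_simp
  have hc1 : ∑ ik ∈ P, c ik = 1 := by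
    rw [hgroup1 ℝ c]
    calc ∑ i ∈ Finset.range nI,
          ∑ k ∈ (Finset.range nK).filter (fun k => u k = s i), c (i, k)
        = ∑ i ∈ Finset.range nI, p i :=
          Finset.sum_congr rfl fun i hi => hinner1 i (Finset.mem_range.mp hi)
      _ = 1 := hp1
  have hΘP : Θ = ∑ ik ∈ P, c ik • point (t ik.1) := by
    rw [hΘI', hgroup1 (PDist S) (fun ik => c ik • point (t ik.1))]
    refine Finset.sum_congr rfl fun i hi => ?_
    dsimp only
    rw [← Finset.sum_smul, hinner1 i (Finset.mem_range.mp hi)]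
  have hΔ'P : Δ' = ∑ ik ∈ P, c ik • D ik.2 := by
    rw [hΔ', hgroup2 (PDist S) (fun ik => c ik • D ik.2)]
    refine Finset.sum_congr rfl fun k hk => ?_
    dsimp only
    rw [← Finset.sum_smul, hinner2 k (Finset.mem_range.mp hk)]
  -- conclusion
  refine ⟨∑ ik ∈ P, c ik • W ik, ?_, ?_⟩
  · rw [hΘP]
    refine weak_linear L α P c (fun ik => point (t ik.1)) W hcpos hc1
      (fun ik hik => (hW ik hik).1) (fun ik _ => lift_refl_point L _) ?_
    exact fun ik hik => liftRel_right_refl L (hW ik hik).2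
  · rw [hΔ'P]
    exact Lift.lin'' P c (fun ik => D ik.2) W hcpos hc1 (fun ik hik => (hW ik hik).2)
end

section
/- In a pLTS, if Δ lift(≈) Θ and Δ ⟹^α̂ Δ' (a weak lifted transition), then there exists Θ' such that Θ ⟹^α̂ Θ' and Δ' lift(≈) Θ', where ≈ is the largest weak bisimulation. -/
open BigOperators

/-- generic reindexing of a double sum over nested finsets of ℕ via `Nat.pair`. -/

lemma sum_pairK {M : Type*} [AddCommMonoid M] (I : Finset ℕ) (J : ℕ → Finset ℕ) (g : ℕ → M) :
    ∑ k ∈ I.biUnion (fun i => (J i).image (Nat.pair i)), g k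
      = ∑ i ∈ I, ∑ j ∈ J i, g (Nat.pair i j) := by
  rw [Finset.sum_biUnion]
  · refine Finset.sum_congr rfl fun i _ => ?_
    rw [Finset.sum_image]
    intro x _ y _ h
    exact (Nat.pair_eq_pair.mp h).2
  · intro a _ b _ hab
    simp only [Function.onFun, Finset.disjoint_left, Finset.mem_image]
    rintro x ⟨j, _, rfl⟩ ⟨j', _, h⟩
    exact hab (Nat.pair_eq_pair.mp h.symm).1

lemma flatten {S : Type} (I : Finset ℕ) (p : ℕ → ℝ) (J : ℕ → Finset ℕ) (q : ℕ → ℕ → ℝ)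
    (hp : ∀ i ∈ I, 0 ≤ p i) (hp1 : ∑ i ∈ I, p i = 1)
    (hq : ∀ i ∈ I, ∀ j ∈ J i, 0 ≤ q i j) (hq1 : ∀ i ∈ I, ∑ j ∈ J i, q i j = 1) :
    ∃ (K : Finset ℕ) (r : ℕ → ℝ) (φ ψ : ℕ → ℕ),
      (∀ k ∈ K, 0 ≤ r k) ∧ (∑ k ∈ K, r k = 1) ∧
      (∀ k ∈ K, φ k ∈ I ∧ ψ k ∈ J (φ k)) ∧
      (∀ F : ℕ → ℕ → PDist S, ∑ k ∈ K, r k • F (φ k) (ψ k)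
        = ∑ i ∈ I, p i • ∑ j ∈ J i, q i j • F i j) := by
  refine ⟨I.biUnion (fun i => (J i).image (Nat.pair i)),
    fun k => p k.unpair.1 * q k.unpair.1 k.unpair.2,
    fun k => k.unpair.1, fun k => k.unpair.2, ?_, ?_, ?_, ?_⟩
  · intro k hk
    simp only [Finset.mem_biUnion, Finset.mem_image] at hk
    obtain ⟨i, hi, j, hj, rfl⟩ := hk
    simp only [Nat.unpair_pair]
    exact mul_nonneg (hp i hi) (hq i hi j hj)
  · rw [sum_pairK]
    simp only [Nat.unpair_pair]
    calc ∑ i ∈ I, ∑ j ∈ J i, p i * q i j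
        = ∑ i ∈ I, p i * ∑ j ∈ J i, q i j := by
          refine Finset.sum_congr rfl fun i _ => ?_; rw [Finset.mul_sum]
      _ = ∑ i ∈ I, p i := by
          refine Finset.sum_congr rfl fun i hi => ?_; rw [hq1 i hi, mul_one]
      _ = 1 := hp1
  · intro k hk
    simp only [Finset.mem_biUnion, Finset.mem_image] at hk
    obtain ⟨i, hi, j, hj, rfl⟩ := hk
    simp only [Nat.unpair_pair]
    exact ⟨hi, hj⟩
  · intro F
    rw [sum_pairK]
    simp only [Nat.unpair_pair]
    refine Finset.sum_congr rfl fun i _ => ?_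
    rw [Finset.smul_sum]
    refine Finset.sum_congr rfl fun j _ => ?_
    rw [mul_smul]

lemma nonempty_of_lift {S : Type} {R₀ : S → PDist S → Prop} {Δ Θ : PDist S}
    (h : Lift R₀ Δ Θ) : Nonempty S := by
  induction h with
  | pt hr => exact ⟨‹S›⟩
  | lin I p Δf Θf hp hp1 hl ih =>
      rcases Finset.nonempty_of_sum_ne_zero (by rw [hp1]; norm_num) with ⟨i, hi⟩
      exact ih i hi

lemma lift_char {S : Type} {R₀ : S → PDist S → Prop} {Δ Θ : PDist S} (h : Lift R₀ Δ Θ) :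
    ∃ (I : Finset ℕ) (p : ℕ → ℝ) (s : ℕ → S) (Θf : ℕ → PDist S),
      (∀ i ∈ I, 0 ≤ p i) ∧ (∑ i ∈ I, p i = 1) ∧ (∀ i ∈ I, R₀ (s i) (Θf i)) ∧
      Δ = ∑ i ∈ I, p i • point (s i) ∧ Θ = ∑ i ∈ I, p i • Θf i := by
  induction h with
  | @pt s Θ hr =>
      exact ⟨{0}, fun _ => 1, fun _ => s, fun _ => Θ, by norm_num, by norm_num,
        fun _ _ => hr, by simp, by simp⟩
  | lin I p Δf Θf hp hp1 hl ih =>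
      have hS : Nonempty S := by
        rcases Finset.nonempty_of_sum_ne_zero (by rw [hp1]; norm_num : ∑ i ∈ I, p i ≠ 0)
          with ⟨i, hi⟩
        exact nonempty_of_lift (hl i hi)
      have hch : ∀ i, ∃ (Ji : Finset ℕ) (qi : ℕ → ℝ) (si : ℕ → S) (Ti : ℕ → PDist S),
          i ∈ I → ((∀ j ∈ Ji, 0 ≤ qi j) ∧ (∑ j ∈ Ji, qi j = 1) ∧
            (∀ j ∈ Ji, R₀ (si j) (Ti j)) ∧
            Δf i = ∑ j ∈ Ji, qi j • point (si j) ∧ Θf i = ∑ j ∈ Ji, qi j • Ti j) := by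
        intro i
        by_cases hi : i ∈ I
        · obtain ⟨Ji, qi, si, Ti, h1, h2, h3, h4, h5⟩ := ih i hi
          exact ⟨Ji, qi, si, Ti, fun _ => ⟨h1, h2, h3, h4, h5⟩⟩
        · exact ⟨∅, 0, fun _ => Classical.arbitrary S, fun _ => 0, fun h => absurd h hi⟩
      choose Ji qi si Ti hprops using hch
      obtain ⟨K, r, φ, ψ, hr, hr1, hmem, hF⟩ := flatten I p Ji qi hp hp1
        (fun i hi => (hprops i hi).1) (fun i hi => (hprops i hi).2.1)
      refine ⟨K, r, fun k => si (φ k) (ψ k), fun k => Ti (φ k) (ψ k), hr, hr1, ?_, ?_, ?_⟩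
      · intro k hk
        obtain ⟨h1, h2⟩ := hmem k hk
        exact ((hprops _ h1).2.2.1) _ h2
      · rw [hF (fun i j => point (si i j))]
        refine Finset.sum_congr rfl fun i hi => ?_
        rw [(hprops i hi).2.2.2.1]
      · rw [hF (fun i j => Ti i j)]
        refine Finset.sum_congr rfl fun i hi => ?_
        rw [(hprops i hi).2.2.2.2]

def ConvexPts {S : Type} (Δ : PDist S) : Prop :=
  ∃ (I : Finset ℕ) (p : ℕ → ℝ) (s : ℕ → S),
    (∀ i ∈ I, 0 ≤ p i) ∧ (∑ i ∈ I, p i = 1) ∧ Δ = ∑ i ∈ I, p i • point (s i)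

lemma lift_of_pointwise {S : Type} {R₀ : S → PDist S → Prop} (I : Finset ℕ) (p : ℕ → ℝ)
    (s : ℕ → S) (Θf : ℕ → PDist S) (hp : ∀ i ∈ I, 0 ≤ p i) (hp1 : ∑ i ∈ I, p i = 1)
    (h : ∀ i ∈ I, R₀ (s i) (Θf i)) :
    Lift R₀ (∑ i ∈ I, p i • point (s i)) (∑ i ∈ I, p i • Θf i) :=
  Lift.lin I p _ _ hp hp1 (fun i hi => Lift.pt (h i hi))

lemma convexPts_left {S : Type} {R₀ : S → PDist S → Prop} {Δ Θ : PDist S}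
    (h : Lift R₀ Δ Θ) : ConvexPts Δ := by
  obtain ⟨I, p, s, Θf, h1, h2, _, h4, _⟩ := lift_char h
  exact ⟨I, p, s, h1, h2, h4⟩

lemma convexPts_right {S : Type} {R₀ : S → PDist S → Prop} {Δ Θ : PDist S}
    (hat : ∀ s Θ₀, R₀ s Θ₀ → ∃ t, Θ₀ = point t)
    (h : Lift R₀ Δ Θ) : ConvexPts Θ := by
  obtain ⟨I, p, s, Θf, h1, h2, h3, _, h5⟩ := lift_char h
  have hS : Nonempty S := nonempty_of_lift h
  have hch : ∀ i, ∃ t : S, i ∈ I → Θf i = point t := by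
    intro i
    by_cases hi : i ∈ I
    · obtain ⟨t, ht⟩ := hat _ _ (h3 i hi); exact ⟨t, fun _ => ht⟩
    · exact ⟨Classical.arbitrary S, fun h => absurd h hi⟩
  choose t ht using hch
  refine ⟨I, p, t, h1, h2, ?_⟩
  rw [h5]
  exact Finset.sum_congr rfl fun i hi => by rw [ht i hi]

lemma lift_self {S Act : Type} (L : PLTS S Act) {Δ : PDist S} (h : ConvexPts Δ) :
    Lift (hatT L none) Δ Δ := by
  obtain ⟨I, p, s, h1, h2, rfl⟩ := h
  exact lift_of_pointwise I p s _ h1 h2 (fun i _ => Or.inr ⟨rfl, rfl⟩)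

/-- `n`-step chains of lifted τ̂-steps, counted from the end. -/

def chainN {S Act : Type} (L : PLTS S Act) : ℕ → PDist S → PDist S → Prop
  | 0 => Eq
  | n + 1 => fun Δ Θ => ∃ X, chainN L n Δ X ∧ Lift (hatT L none) X Θ

lemma weakTau_iff_chainN {S Act : Type} (L : PLTS S Act) {Δ Θ : PDist S} :
    weakTau L Δ Θ ↔ ∃ n, chainN L n Δ Θ := by
  constructor
  · intro h
    induction h with
    | refl => exact ⟨0, rfl⟩
    | tail _ hstep ih =>
        obtain ⟨n, hn⟩ := ih
        exact ⟨n + 1, _, hn, hstep⟩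
  · rintro ⟨n, hn⟩
    induction n generalizing Θ with
    | zero => cases hn; exact Relation.ReflTransGen.refl
    | succ n ih =>
        obtain ⟨X, hX, hstep⟩ := hn
        exact Relation.ReflTransGen.tail (ih hX) hstep

lemma chainN_pad {S Act : Type} (L : PLTS S Act) {Δ Θ : PDist S} {n : ℕ}
    (hΘ : ConvexPts Θ) (h : chainN L n Δ Θ) {m : ℕ} (hm : n ≤ m) : chainN L m Δ Θ := by
  induction m with
  | zero => cases Nat.le_zero.mp hm; exact h
  | succ m ih =>
      rcases Nat.lt_or_ge n (m + 1) with hlt | hge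
      · exact ⟨Θ, ih (Nat.lt_succ_iff.mp hlt), lift_self L hΘ⟩
      · cases le_antisymm hm hge; exact h

lemma chainN_lin {S Act : Type} (L : PLTS S Act) (n : ℕ) (I : Finset ℕ) (p : ℕ → ℝ)
    (Δf Θf : ℕ → PDist S) (hp : ∀ i ∈ I, 0 ≤ p i) (hp1 : ∑ i ∈ I, p i = 1)
    (h : ∀ i ∈ I, chainN L n (Δf i) (Θf i)) :
    chainN L n (∑ i ∈ I, p i • Δf i) (∑ i ∈ I, p i • Θf i) := by
  induction n generalizing Θf with
  | zero =>
      have : ∀ i ∈ I, Δf i = Θf i := h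
      exact Finset.sum_congr rfl fun i hi => by rw [this i hi]
  | succ n ih =>
      have hch : ∀ i, ∃ X, i ∈ I → (chainN L n (Δf i) X ∧ Lift (hatT L none) X (Θf i)) := by
        intro i
        by_cases hi : i ∈ I
        · obtain ⟨X, h1, h2⟩ := h i hi; exact ⟨X, fun _ => ⟨h1, h2⟩⟩
        · exact ⟨0, fun h => absurd h hi⟩
      choose X hX using hch
      exact ⟨∑ i ∈ I, p i • X i, ih X (fun i hi => (hX i hi).1),
        Lift.lin I p X Θf hp hp1 (fun i hi => (hX i hi).2)⟩

lemma weakTau_lin {S Act : Type} (L : PLTS S Act) (I : Finset ℕ) (p : ℕ → ℝ)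
    (Δf Θf : ℕ → PDist S) (hp : ∀ i ∈ I, 0 ≤ p i) (hp1 : ∑ i ∈ I, p i = 1)
    (h : ∀ i ∈ I, weakTau L (Δf i) (Θf i) ∧ ConvexPts (Θf i)) :
    weakTau L (∑ i ∈ I, p i • Δf i) (∑ i ∈ I, p i • Θf i) := by
  have hch : ∀ i, ∃ n, i ∈ I → chainN L n (Δf i) (Θf i) := by
    intro i
    by_cases hi : i ∈ I
    · obtain ⟨n, hn⟩ := (weakTau_iff_chainN L).mp (h i hi).1; exact ⟨n, fun _ => hn⟩
    · exact ⟨0, fun h => absurd h hi⟩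
  choose n hn using hch
  refine (weakTau_iff_chainN L).mpr ⟨∑ i ∈ I, n i, chainN_lin L _ I p Δf Θf hp hp1 ?_⟩
  intro i hi
  exact chainN_pad L (h i hi).2 (hn i hi)
    (Finset.single_le_sum (fun i _ => Nat.zero_le _) hi)

lemma weak_lin {S Act : Type} (L : PLTS S Act) (α : Option Act) (I : Finset ℕ) (p : ℕ → ℝ)
    (Δf Θf : ℕ → PDist S) (hp : ∀ i ∈ I, 0 ≤ p i) (hp1 : ∑ i ∈ I, p i = 1)
    (h : ∀ i ∈ I, weak L α (Δf i) (Θf i) ∧ ConvexPts (Θf i)) :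
    weak L α (∑ i ∈ I, p i • Δf i) (∑ i ∈ I, p i • Θf i) := by
  cases α with
  | none => exact weakTau_lin L I p Δf Θf hp hp1 h
  | some a =>
      have hch : ∀ i, ∃ X, ∃ Y, i ∈ I →
          (weakTau L (Δf i) X ∧ strongL L (some a) X Y ∧ weakTau L Y (Θf i)) := by
        intro i
        by_cases hi : i ∈ I
        · obtain ⟨X, Y, h1, h2, h3⟩ := (h i hi).1; exact ⟨X, Y, fun _ => ⟨h1, h2, h3⟩⟩
        · exact ⟨0, 0, fun h => absurd h hi⟩
      choose X Y hXY using hch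
      refine ⟨∑ i ∈ I, p i • X i, ∑ i ∈ I, p i • Y i, ?_, ?_, ?_⟩
      · refine weakTau_lin L I p Δf X hp hp1 fun i hi => ?_
        exact ⟨(hXY i hi).1, convexPts_left (hXY i hi).2.1⟩
      · exact Lift.lin I p X Y hp hp1 (fun i hi => (hXY i hi).2.1)
      · refine weakTau_lin L I p Y Θf hp hp1 fun i hi => ?_
        exact ⟨(hXY i hi).2.2, (h i hi).2⟩

open scoped Classical

lemma eval_points {S : Type} (J : Finset ℕ) (q : ℕ → ℝ) (u : ℕ → S) (v : S) :
    (∑ j ∈ J, q j • point (u j)) v = ∑ j ∈ J, ite (u j = v) (q j) 0 := by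
  rw [Finsupp.finset_sum_apply]
  refine Finset.sum_congr rfl fun j _ => ?_
  simp [point, Finsupp.single_apply, mul_ite]

lemma weight_le_eval {S : Type} {Δ : PDist S} {I : Finset ℕ} {p : ℕ → ℝ} {s : ℕ → S}
    (hp : ∀ i ∈ I, 0 ≤ p i) (hΔ : Δ = ∑ i ∈ I, p i • point (s i))
    {i : ℕ} (hi : i ∈ I) : p i ≤ Δ (s i) := by
  rw [hΔ, eval_points]
  have := Finset.single_le_sum (f := fun i' => ite (s i' = s i) (p i') 0)
    (fun i' hi' => by split_ifs with h; exacts [hp i' hi', le_rfl]) hi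
  simpa using this

lemma weight_zero {S : Type} {Δ : PDist S} {I : Finset ℕ} {p : ℕ → ℝ} {s : ℕ → S}
    (hp : ∀ i ∈ I, 0 ≤ p i) (hΔ : Δ = ∑ i ∈ I, p i • point (s i))
    {i : ℕ} (hi : i ∈ I) (h0 : Δ (s i) = 0) : p i = 0 :=
  le_antisymm (h0 ▸ weight_le_eval hp hΔ hi) (hp i hi)

lemma regroup {S : Type} {Δ : PDist S} (I J : Finset ℕ) (p q : ℕ → ℝ) (s u : ℕ → S)
    (hp : ∀ i ∈ I, 0 ≤ p i) (hp1 : ∑ i ∈ I, p i = 1)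
    (hq : ∀ j ∈ J, 0 ≤ q j) (hq1 : ∑ j ∈ J, q j = 1)
    (hΔp : Δ = ∑ i ∈ I, p i • point (s i)) (hΔq : Δ = ∑ j ∈ J, q j • point (u j)) :
    ∃ (K : Finset ℕ) (w : ℕ → ℝ) (φ ψ : ℕ → ℕ),
      (∀ k ∈ K, 0 ≤ w k) ∧ (∑ k ∈ K, w k = 1) ∧
      (∀ k ∈ K, φ k ∈ I ∧ ψ k ∈ J ∧ u (ψ k) = s (φ k)) ∧
      (∀ (f : ℕ → PDist S), ∑ k ∈ K, w k • f (φ k) = ∑ i ∈ I, p i • f i) ∧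
      (∀ (g : ℕ → PDist S), ∑ k ∈ K, w k • g (ψ k) = ∑ j ∈ J, q j • g j) := by
  set P : Finset (ℕ × ℕ) := (I ×ˢ J).filter (fun ij => u ij.2 = s ij.1) with hP
  set w : ℕ → ℝ := fun k => p k.unpair.1 * q k.unpair.2 * (Δ (s k.unpair.1))⁻¹ with hw
  have hinj : ∀ x ∈ P, ∀ y ∈ P, Nat.pair x.1 x.2 = Nat.pair y.1 y.2 → x = y := by
    intro x _ y _ h
    obtain ⟨h1, h2⟩ := Nat.pair_eq_pair.mp h
    exact Prod.ext h1 h2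
  have hqeval : ∀ v : S, ∑ j ∈ J, ite (u j = v) (q j) 0 = Δ v := by
    intro v; rw [hΔq, eval_points]
  have hpeval : ∀ v : S, ∑ i ∈ I, ite (s i = v) (p i) 0 = Δ v := by
    intro v; rw [hΔp, eval_points]
  have hb : ∀ (f : ℕ → PDist S),
      ∑ k ∈ P.image (fun ij => Nat.pair ij.1 ij.2), w k • f k.unpair.1
        = ∑ i ∈ I, p i • f i := by
    intro f
    rw [Finset.sum_image hinj]
    simp only [hw, Nat.unpair_pair, hP, Finset.sum_filter, Finset.sum_product]
    refine Finset.sum_congr rfl fun i hi => ?_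
    by_cases h0 : Δ (s i) = 0
    · have hp0 : p i = 0 := weight_zero hp hΔp hi h0
      simp [hp0]
    · calc ∑ j ∈ J, ite (u j = s i) ((p i * q j * (Δ (s i))⁻¹) • f i) 0
          = ∑ j ∈ J, (ite (u j = s i) (q j) 0) • ((p i * (Δ (s i))⁻¹) • f i) := by
            refine Finset.sum_congr rfl fun j _ => ?_
            split_ifs with hcnd
            · rw [smul_smul, show q j * (p i * (Δ (s i))⁻¹) = p i * q j * (Δ (s i))⁻¹ by ring]
            · rw [zero_smul]
        _ = (∑ j ∈ J, ite (u j = s i) (q j) 0) • ((p i * (Δ (s i))⁻¹) • f i) := by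
            rw [Finset.sum_smul]
        _ = p i • f i := by
            rw [hqeval, smul_smul, show Δ (s i) * (p i * (Δ (s i))⁻¹) = p i by
              field_simp]
  have hc : ∀ (g : ℕ → PDist S),
      ∑ k ∈ P.image (fun ij => Nat.pair ij.1 ij.2), w k • g k.unpair.2
        = ∑ j ∈ J, q j • g j := by
    intro g
    rw [Finset.sum_image hinj]
    simp only [hw, Nat.unpair_pair, hP, Finset.sum_filter, Finset.sum_product]
    rw [Finset.sum_comm]
    refine Finset.sum_congr rfl fun j hj => ?_
    by_cases h0 : Δ (u j) = 0
    · have hq0 : q j = 0 := weight_zero hq hΔq hj h0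
      have hz : ∀ i ∈ I, ite (u j = s i) ((p i * q j * (Δ (s i))⁻¹) • g j) 0 = 0 := by
        intro i _; split_ifs <;> simp [hq0]
      rw [Finset.sum_congr rfl hz]
      simp [hq0]
    · calc ∑ i ∈ I, ite (u j = s i) ((p i * q j * (Δ (s i))⁻¹) • g j) 0
          = ∑ i ∈ I, (ite (s i = u j) (p i) 0) • ((q j * (Δ (u j))⁻¹) • g j) := by
            refine Finset.sum_congr rfl fun i _ => ?_
            by_cases hcnd : u j = s i
            · rw [if_pos hcnd, if_pos hcnd.symm, ← hcnd, smul_smul,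
                show p i * (q j * (Δ (u j))⁻¹) = p i * q j * (Δ (u j))⁻¹ by ring]
            · rw [if_neg hcnd, if_neg (fun h => hcnd h.symm), zero_smul]
        _ = (∑ i ∈ I, ite (s i = u j) (p i) 0) • ((q j * (Δ (u j))⁻¹) • g j) := by
            rw [Finset.sum_smul]
        _ = q j • g j := by
            rw [hpeval, smul_smul, show Δ (u j) * (q j * (Δ (u j))⁻¹) = q j by
              field_simp]
  refine ⟨P.image (fun ij => Nat.pair ij.1 ij.2), w, fun k => k.unpair.1,
    fun k => k.unpair.2, ?_, ?_, ?_, hb, hc⟩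
  · intro k hk
    simp only [Finset.mem_image, hP, Finset.mem_filter, Finset.mem_product] at hk
    obtain ⟨ij, ⟨⟨hi, hj⟩, _⟩, rfl⟩ := hk
    simp only [hw, Nat.unpair_pair]
    exact mul_nonneg (mul_nonneg (hp _ hi) (hq _ hj))
      (inv_nonneg.mpr ((hp _ hi).trans (weight_le_eval hp hΔp hi)))
  · obtain ⟨i₀, hi₀⟩ : I.Nonempty :=
      Finset.nonempty_of_sum_ne_zero (by rw [hp1]; norm_num)
    have h2 := congrArg (fun D : PDist S => D (s i₀)) (hb (fun _ => point (s i₀)))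
    simp only [Finsupp.finset_sum_apply, Finsupp.smul_apply, smul_eq_mul, point,
      Finsupp.single_eq_same, mul_one] at h2
    exact h2.trans hp1
  · intro k hk
    simp only [Finset.mem_image, hP, Finset.mem_filter, Finset.mem_product] at hk
    obtain ⟨ij, ⟨⟨hi, hj⟩, hcond⟩, rfl⟩ := hk
    simp only [Nat.unpair_pair]
    exact ⟨hi, hj, hcond⟩

lemma lift_mono {S : Type} {R₀ R₁ : S → PDist S → Prop} (h : ∀ s Θ, R₀ s Θ → R₁ s Θ)
    {Δ Θ : PDist S} (hl : Lift R₀ Δ Θ) : Lift R₁ Δ Θ := by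
  induction hl with
  | pt hr => exact Lift.pt (h _ _ hr)
  | lin I p Δf Θf hp hp1 _ ih => exact Lift.lin I p Δf Θf hp hp1 ih

lemma liftRel_mono {S : Type} {R R' : S → S → Prop} (h : ∀ s t, R s t → R' s t)
    {Δ Θ : PDist S} (hl : liftRel R Δ Θ) : liftRel R' Δ Θ :=
  lift_mono (fun s Θ₀ => fun ⟨t, h1, h2⟩ => ⟨t, h s t h1, h2⟩) hl

lemma convexPts_point {S : Type} (t : S) : ConvexPts (point t) :=
  ⟨{0}, fun _ => 1, fun _ => t, by norm_num, by norm_num, by simp⟩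

lemma convexPts_liftRel_right {S : Type} {R : S → S → Prop} {Δ Θ : PDist S}
    (h : liftRel R Δ Θ) : ConvexPts Θ :=
  convexPts_right (fun s Θ₀ => fun ⟨t, _, h2⟩ => ⟨t, h2⟩) h

lemma key_transfer {S Act : Type} (L : PLTS S Act) (α : Option Act) {Δ Θ Δ' : PDist S}
    (h : liftRel (Bisim L) Δ Θ) (hstep : Lift (hatT L α) Δ Δ') :
    ∃ Θ', weak L α Θ Θ' ∧ liftRel (Bisim L) Δ' Θ' := by
  obtain ⟨I, p, s, Θf, hp, hp1, hatom, hΔp, hΘ⟩ := lift_char h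
  haveI hS : Nonempty S := nonempty_of_lift h
  have hch : ∀ i, ∃ t : S, i ∈ I → (Bisim L (s i) t ∧ Θf i = point t) := by
    intro i
    by_cases hi : i ∈ I
    · obtain ⟨t, h1, h2⟩ := hatom i hi; exact ⟨t, fun _ => ⟨h1, h2⟩⟩
    · exact ⟨Classical.arbitrary S, fun h => absurd h hi⟩
  choose t ht using hch
  obtain ⟨J, q, u, Ξf, hq, hq1, hatom2, hΔq, hΔ'⟩ := lift_char hstep
  obtain ⟨K, w, φ, ψ, hw, hw1, hmem, hF, hG⟩ := regroup I J p q s u hp hp1 hq hq1 hΔp hΔq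
  have hmatch : ∀ k, ∃ Ξ : PDist S, k ∈ K →
      (weak L α (point (t (φ k))) Ξ ∧ liftRel (Bisim L) (Ξf (ψ k)) Ξ ∧ ConvexPts Ξ) := by
    intro k
    by_cases hk : k ∈ K
    · obtain ⟨hkI, hkJ, hkeq⟩ := hmem k hk
      obtain ⟨hbis, _⟩ := ht (φ k) hkI
      have hat := hatom2 (ψ k) hkJ
      rw [hkeq] at hat
      obtain ⟨R, hR, hst⟩ := hbis
      cases hat with
      | inl htr =>
          obtain ⟨Ξ, hwk, hlift⟩ := (hR _ _ hst).1 α _ htr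
          exact ⟨Ξ, fun _ => ⟨hwk, liftRel_mono (fun a b hab => ⟨R, hR, hab⟩) hlift,
            convexPts_liftRel_right hlift⟩⟩
      | inr hstay =>
          obtain ⟨hα, hpt'⟩ := hstay
          subst hα
          refine ⟨point (t (φ k)), fun _ =>
            ⟨Relation.ReflTransGen.refl, ?_, convexPts_point _⟩⟩
          rw [hpt']
          exact Lift.pt ⟨t (φ k), ⟨R, hR, hst⟩, rfl⟩
    · exact ⟨0, fun h => absurd h hk⟩
  choose Ξ hΞ using hmatch
  refine ⟨∑ k ∈ K, w k • Ξ k, ?_, ?_⟩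
  · have hΘ' : Θ = ∑ k ∈ K, w k • point (t (φ k)) := by
      calc Θ = ∑ i ∈ I, p i • point (t i) := by
              rw [hΘ]; exact Finset.sum_congr rfl fun i hi => by rw [(ht i hi).2]
        _ = ∑ k ∈ K, w k • point (t (φ k)) := (hF (fun i => point (t i))).symm
    rw [hΘ']
    exact weak_lin L α K w _ Ξ hw hw1 (fun k hk => ⟨(hΞ k hk).1, (hΞ k hk).2.2⟩)
  · have hΔ'' : Δ' = ∑ k ∈ K, w k • Ξf (ψ k) := by
      rw [hΔ']; exact (hG Ξf).symm
    rw [hΔ'']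
    exact Lift.lin K w _ Ξ hw hw1 (fun k hk => (hΞ k hk).2.1)

lemma tau_transfer {S Act : Type} (L : PLTS S Act) {Δ Θ Δ' : PDist S}
    (h : liftRel (Bisim L) Δ Θ) (hstep : weakTau L Δ Δ') :
    ∃ Θ', weakTau L Θ Θ' ∧ liftRel (Bisim L) Δ' Θ' := by
  have hstep' : Relation.ReflTransGen (Lift (hatT L none)) Δ Δ' := hstep
  clear hstep
  induction hstep' with
  | refl => exact ⟨Θ, Relation.ReflTransGen.refl, h⟩
  | tail _ hst ih =>
      obtain ⟨Θx, hx1, hx2⟩ := ih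
      obtain ⟨Θ', h1, h2⟩ := key_transfer L none hx2 hst
      exact ⟨Θ', Relation.ReflTransGen.trans hx1 h1, h2⟩

/-- Weak transfer property: a weak transition from `Δ` is matched by a weak transition
from any `Θ` with `Δ lift(≈) Θ`, up to `lift(≈)`. -/
theorem bisim_weak_transfer {S Act : Type} (L : PLTS S Act) (α : Option Act)
    (Δ Θ Δ' : PDist S) (h : liftRel (Bisim L) Δ Θ) (hstep : weak L α Δ Δ') :
    ∃ Θ', weak L α Θ Θ' ∧ liftRel (Bisim L) Δ' Θ' := by
  cases α with
  | none => exact tau_transfer L h hstep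
  | some a =>
      obtain ⟨Δ₁, Δ₂, h1, h2, h3⟩ := hstep
      obtain ⟨Θ₁, hw1, hl1⟩ := tau_transfer L h h1
      obtain ⟨Θ₂, hw2, hl2⟩ := key_transfer L (some a) hl1
        (lift_mono (fun s Δ ht => Or.inl ht) h2)
      obtain ⟨Θ', hw3, hl3⟩ := tau_transfer L hl2 h3
      obtain ⟨X, Y, ha, hb, hc⟩ := hw2
      exact ⟨Θ', ⟨X, Y, Relation.ReflTransGen.trans hw1 ha, hb,
        Relation.ReflTransGen.trans hc hw3⟩, hl3⟩
end
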